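/- Amplification lemma: Let G be a group acting on a set X, let V ⊆ X be finite, let ε > 0, and suppose E ⊆ G is a nonempty finite set and g ∈ G is such that (a) for all x, y ∈ V and all h ∈ E, and all n, the quantity a_n(hx, hy) := |{g^k(hx) : 1 ≤ k ≤ n} ∩ {g^k(hy) : 1 ≤ k ≤ n}|/n → 1 whenever hx and hy lie in the same 'class', and (b) |{h ∈ E : hx and hy in the same class}| ≥ (1-ε)|E| for all x,y ∈ V. Then for every ε' > ε there exists n such that E' = {g^k h : 1 ≤ k ≤ n, h ∈ E} (a multiset of size n|E|) satisfies |E'x Δ E'y| ≤ 2ε'|E'| for all x, y ∈ V, with multiset cardinalities. -/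

import Mathlib

open Filter

/-- Multiset symmetric difference, counted with multiplicity. -/
def msymmDiff {α : Type*} [DecidableEq α] (s t : Multiset α) : Multiset α :=
  (s - t) + (t - s)

/-- Normalized multiset intersection a_n(z,w) = |{gᵏz : 1 ≤ k ≤ n} ∩ {gᵏw : 1 ≤ k ≤ n}|/n. -/
noncomputable def aSeq {G X : Type*} [Group G] [MulAction G X] [DecidableEq X]
    (g : G) (z w : X) (n : ℕ) : ℝ :=
  ((((Finset.Icc 1 n).val.map fun k : ℕ => g ^ k • z) ∩
    ((Finset.Icc 1 n).val.map fun k : ℕ => g ^ k • w)).card : ℝ) / n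

/-- z and w are in the same class if a_n(z,w) → 1. -/
def sameClass {G X : Type*} [Group G] [MulAction G X] [DecidableEq X]
    (g : G) (z w : X) : Prop :=
  Tendsto (aSeq g z w) atTop (nhds 1)

private lemma map_product_bind {α β γ : Type*} (a : Multiset α) (b : Multiset β)
    (f : α × β → γ) :
    (a ×ˢ b).map f = b.bind fun y => a.map fun x => f (x, y) := by
  induction b using Multiset.induction with
  | empty => simp
  | cons y b ih =>
    rw [Multiset.product_cons, Multiset.map_add, Multiset.cons_bind, ih, Multiset.map_map]
    rfl

private lemma inter_add_le' {β : Type*} [DecidableEq β] (s1 s2 t1 t2 : Multiset β) :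
    s1 ∩ t1 + s2 ∩ t2 ≤ (s1 + s2) ∩ (t1 + t2) := by
  rw [Multiset.le_iff_count]
  intro a
  simp only [Multiset.count_add, Multiset.count_inter]
  omega

private lemma sum_card_inter_le {α β : Type*} [DecidableEq β] (s : Multiset α)
    (F H : α → Multiset β) :
    (s.map fun a => Multiset.card (F a ∩ H a)).sum ≤ Multiset.card (s.bind F ∩ s.bind H) := by
  induction s using Multiset.induction with
  | empty => simp
  | cons a s ih =>
    rw [Multiset.map_cons, Multiset.sum_cons, Multiset.cons_bind, Multiset.cons_bind]
    calc Multiset.card (F a ∩ H a) + (s.map fun a => Multiset.card (F a ∩ H a)).sum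
        ≤ Multiset.card (F a ∩ H a) + Multiset.card (s.bind F ∩ s.bind H) := by omega
      _ = Multiset.card (F a ∩ H a + s.bind F ∩ s.bind H) := by rw [Multiset.card_add]
      _ ≤ Multiset.card ((F a + s.bind F) ∩ (H a + s.bind H)) :=
          Multiset.card_le_card (inter_add_le' _ _ _ _)

open scoped Classical in
/-- amplification lemma: if for all x, y ∈ V at least (1-ε)|E| of the
elements h ∈ E put hx and hy in the same class (a_n(hx,hy) → 1), then for every
ε' > ε there is n such that the multiset E' = {gᵏh : 1 ≤ k ≤ n, h ∈ E} satisfies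
|E'x Δ E'y| ≤ 2ε'|E'| for all x, y ∈ V. -/
theorem stmt7 {G X : Type*} [Group G] [MulAction G X] [DecidableEq X]
    (V : Finset X) (ε : ℝ) (hε : 0 < ε) (E : Finset G) (hE : E.Nonempty) (g : G)
    (hb : ∀ x ∈ V, ∀ y ∈ V,
      (1 - ε) * E.card ≤ ((E.filter fun h => sameClass g (h • x) (h • y)).card : ℝ)) :
    ∀ ε' > ε, ∃ n : ℕ, 1 ≤ n ∧
      letI E' : Multiset G := ((Finset.Icc 1 n) ×ˢ E).val.map fun p => g ^ p.1 * p.2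
      ∀ x ∈ V, ∀ y ∈ V,
        ((msymmDiff (E'.map (· • x)) (E'.map (· • y))).card : ℝ) ≤ 2 * ε' * E'.card := by
  intro ε' hε'
  set δ := ε' - ε with hδdef
  have hδ : 0 < δ := by simp only [hδdef]; linarith
  have hev : ∀ᶠ n in atTop, ∀ x ∈ V, ∀ y ∈ V, ∀ h ∈ E,
      sameClass g (h • x) (h • y) → 1 - δ ≤ aSeq g (h • x) (h • y) n := by
    rw [Filter.eventually_all_finset]
    intro x _
    rw [Filter.eventually_all_finset]
    intro y _
    rw [Filter.eventually_all_finset]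
    intro h _
    by_cases hsc : sameClass g (h • x) (h • y)
    · exact (hsc.eventually (eventually_ge_nhds (by linarith))).mono fun n hn _ => hn
    · exact Filter.Eventually.of_forall fun n hn => absurd hn hsc
  obtain ⟨n, hn, hn1⟩ := (hev.and (eventually_ge_atTop 1)).exists
  refine ⟨n, hn1, ?_⟩
  intro x hx y hy
  set E' : Multiset G := ((Finset.Icc 1 n) ×ˢ E).val.map fun p => g ^ p.1 * p.2 with hE'
  have hn0 : (0:ℝ) < n := by exact_mod_cast hn1
  -- rewrite the images as binds over E
  have himg : ∀ z : X, E'.map (· • z) =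
      E.val.bind fun h => (Finset.Icc 1 n).val.map fun k : ℕ => g ^ k • (h • z) := by
    intro z
    rw [hE', Multiset.map_map, Finset.product_val]
    simp only [Function.comp_def]
    rw [map_product_bind _ _ (fun p => (g ^ p.1 * p.2) • z)]
    simp [mul_smul]
  set Fx : G → Multiset X := fun h => (Finset.Icc 1 n).val.map fun k : ℕ => g ^ k • (h • x)
    with hFx
  set Fy : G → Multiset X := fun h => (Finset.Icc 1 n).val.map fun k : ℕ => g ^ k • (h • y)
    with hFy
  set s := E'.map (· • x)
  set t := E'.map (· • y)
  have hs : s = E.val.bind Fx := himg x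
  have ht : t = E.val.bind Fy := himg y
  have hcardE' : Multiset.card E' = n * E.card := by
    rw [hE', Multiset.card_map, Finset.product_val, Multiset.card_product]
    simp [Nat.card_Icc]
  have hcards : Multiset.card s = n * E.card := by rw [Multiset.card_map, hcardE']
  have hcardt : Multiset.card t = n * E.card := by rw [Multiset.card_map, hcardE']
  set I := Multiset.card (s ∩ t) with hI
  -- symmetric difference card
  have hIs : I ≤ Multiset.card s := Multiset.card_le_card Multiset.inter_le_left
  have hIt : I ≤ Multiset.card t := by
    rw [Multiset.inter_comm] at hI
    exact hI ▸ Multiset.card_le_card Multiset.inter_le_left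
  have hsymm : Multiset.card (msymmDiff s t) = (Multiset.card s - I) + (Multiset.card t - I) := by
    have h1 : Multiset.card (s - t) + I = Multiset.card s := by
      rw [hI, ← Multiset.card_add, Multiset.sub_add_inter]
    have h2 : Multiset.card (t - s) + I = Multiset.card t := by
      rw [hI, Multiset.inter_comm, ← Multiset.card_add, Multiset.sub_add_inter]
    unfold msymmDiff
    rw [Multiset.card_add]
    omega
  -- lower bound on I
  set A := E.filter fun h => sameClass g (h • x) (h • y) with hA
  have hgood : ∀ h ∈ A, (1 - δ) * n ≤ (Multiset.card (Fx h ∩ Fy h) : ℝ) := by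
    intro h hh
    rw [hA, Finset.mem_filter] at hh
    have := hn x hx y hy h hh.1 hh.2
    unfold aSeq at this
    rw [le_div_iff₀ hn0] at this
    exact this
  have hsum1 : (∑ h ∈ A, Multiset.card (Fx h ∩ Fy h)) ≤ I := by
    calc (∑ h ∈ A, Multiset.card (Fx h ∩ Fy h))
        ≤ ∑ h ∈ E, Multiset.card (Fx h ∩ Fy h) :=
          Finset.sum_le_sum_of_subset (Finset.filter_subset _ _)
      _ ≤ I := by
          rw [hI, hs, ht]
          exact sum_card_inter_le E.val Fx Fy
  have hIlow : (A.card : ℝ) * ((1 - δ) * n) ≤ (I : ℝ) := by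
    have h1 : (A.card : ℝ) * ((1 - δ) * n) ≤ ∑ h ∈ A, (Multiset.card (Fx h ∩ Fy h) : ℝ) := by
      have := Finset.card_nsmul_le_sum A (fun h => (Multiset.card (Fx h ∩ Fy h) : ℝ))
        ((1 - δ) * n) hgood
      rwa [nsmul_eq_mul] at this
    calc (A.card : ℝ) * ((1 - δ) * n) ≤ ∑ h ∈ A, (Multiset.card (Fx h ∩ Fy h) : ℝ) := h1
      _ ≤ (I : ℝ) := by exact_mod_cast hsum1
  have hA1 : (1 - ε) * E.card ≤ (A.card : ℝ) := hb x hx y hy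
  have hA2 : (A.card : ℝ) ≤ E.card := by
    exact_mod_cast Finset.card_le_card (Finset.filter_subset _ _)
  have hEpos : (0:ℝ) < E.card := by exact_mod_cast hE.card_pos
  -- finish
  have hfin : ((Multiset.card (msymmDiff s t)) : ℝ) ≤ 2 * ε' * (n * E.card) := by
    have hIs' : I ≤ n * E.card := hcards ▸ hIs
    rw [hsymm, hcards, hcardt]
    push_cast [Nat.cast_sub hIs']
    have key1 : (n:ℝ) * ((E.card:ℝ) - A.card) ≤ (n:ℝ) * (ε * E.card) :=
      mul_le_mul_of_nonneg_left (by linarith) hn0.le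
    have key2 : (A.card:ℝ) * δ * n ≤ (E.card:ℝ) * δ * n := by
      have : (A.card:ℝ) * δ ≤ (E.card:ℝ) * δ := mul_le_mul_of_nonneg_right hA2 hδ.le
      exact mul_le_mul_of_nonneg_right this hn0.le
    have hεδ : ε' = ε + δ := by rw [hδdef]; ring
    have key3 : 2 * ε' * ((n:ℝ) * E.card) = 2 * ε * ((n:ℝ) * E.card) + 2 * δ * ((n:ℝ) * E.card) := by
      rw [hεδ]; ring
    have hIlow' : (A.card:ℝ) * n - (A.card:ℝ) * δ * n ≤ (I:ℝ) := by nlinarith [hIlow]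
    rw [key3]
    nlinarith [hIlow', key1, key2]
  calc ((Multiset.card (msymmDiff s t)) : ℝ) ≤ 2 * ε' * (n * E.card) := hfin
    _ = 2 * ε' * (Multiset.card E') := by rw [hcardE']; push_cast; ring
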